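/- Let (R, m) be a Cohen–Macaulay local ring and let p be a prime ideal of R of height g such that the localization R_p is not a regular local ring. Let z_1, ..., z_g be a regular sequence on R contained in p, set J = (z_1, ..., z_g) and I = J : p. Then J ⊆ I and I² = J·I; in particular J is a reduction of I with reduction number at most 1, so I is an equimultiple ideal. -/

import Mathlib

open RingTheory.Sequence IsLocalRing TensorProduct

/-- A Noetherian local ring is Cohen–Macaulay iff its depth equals its Krull dimension;
equivalently, iff there is a regular sequence of length `dim R` inside the maximal ideal. -/
def IsCohenMacaulayLocalRing (R : Type*) [CommRing R] [IsLocalRing R] : Prop :=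
  ∃ rs : List R, (∀ r ∈ rs, r ∈ maximalIdeal R) ∧ IsRegular R rs ∧
    (rs.length : WithBot ℕ∞) = ringKrullDim R

/-- A local ring is regular iff its maximal ideal can be generated by `dim R` elements. -/
def IsRegularLocalRing' (R : Type*) [CommRing R] [IsLocalRing R] : Prop :=
  ∃ s : Finset R, Ideal.span (s : Set R) = maximalIdeal R ∧
    (s.card : WithBot ℕ∞) = ringKrullDim R

namespace CHVAux

section Lists
variable {α : Type*}

lemma perm_eraseIdx_append_getD (d : α) :
    ∀ (l : List α) (i : ℕ), i < l.length → l.Perm (l.eraseIdx i ++ [l.getD i d])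
  | [], i, h => by simp at h
  | a :: t, 0, _ => by simpa using (List.perm_append_singleton a t).symm
  | a :: t, (i + 1), h => by
    have ih := perm_eraseIdx_append_getD d t i (by simpa using h)
    simpa using ih.cons a

lemma getD_mem_eraseIdx (d : α) :
    ∀ (l : List α) (i j : ℕ), i < l.length → i ≠ j → l.getD i d ∈ l.eraseIdx j
  | [], i, j, hi, _ => by simp at hi
  | a :: t, 0, 0, _, hij => absurd rfl hij
  | a :: t, (i+1), 0, hi, _ => by
    have hi' : i < t.length := by simpa using hi
    simp only [List.getD_cons_succ, List.eraseIdx_cons_zero]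
    rw [List.getD_eq_getElem t d hi']
    exact List.getElem_mem hi'
  | a :: t, 0, (j+1), _, _ => by simp
  | a :: t, (i+1), (j+1), hi, hij => by
    have := getD_mem_eraseIdx d t i j (by simpa using hi) (by omega)
    simpa using Or.inr this

end Lists

section KoszulAux
variable {R : Type*} [CommRing R]

lemma getD_mem_ofList {l : List R} {i : ℕ} (h : i < l.length) :
    l.getD i 0 ∈ Ideal.ofList l := by
  rw [List.getD_eq_getElem l 0 h]
  exact Ideal.subset_span (List.getElem_mem h)

lemma mem_ofList_iff {l : List R} {x : R} :
    x ∈ Ideal.ofList l ↔ ∃ c : ℕ → R, x = ∑ i ∈ Finset.range l.length, c i * l.getD i 0 := by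
  induction l generalizing x with
  | nil =>
    simp [Ideal.ofList_nil]
  | cons r l ih =>
    rw [Ideal.ofList_cons]
    constructor
    · intro hx
      rcases Submodule.mem_sup.mp hx with ⟨y, hy, z, hz, rfl⟩
      rcases Ideal.mem_span_singleton'.mp hy with ⟨a, rfl⟩
      rcases ih.mp hz with ⟨c, rfl⟩
      refine ⟨fun i => Nat.casesOn i a c, ?_⟩
      rw [List.length_cons, Finset.sum_range_succ']
      simp [add_comm]
    · rintro ⟨c, rfl⟩
      rw [List.length_cons, Finset.sum_range_succ']
      refine Submodule.add_mem _ (Submodule.sum_mem _ fun i hi => ?_) ?_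
      · simp only [List.getD_cons_succ]
        exact Submodule.mem_sup_right (Ideal.mul_mem_left _ _
          (getD_mem_ofList (by simpa using Finset.mem_range.mp hi)))
      · simpa using Submodule.mem_sup_left (Ideal.mem_span_singleton'.mpr ⟨c 0, rfl⟩)

lemma smul_top_eq (K : Ideal R) : (K • ⊤ : Submodule R R) = K := by
  rw [Ideal.smul_eq_mul, Ideal.mul_top]

lemma ofList_le_ofList_append_left (l l' : List R) :
    Ideal.ofList l ≤ Ideal.ofList (l ++ l') := by
  rw [Ideal.ofList_append]; exact le_sup_left

lemma koszul_syzygy {l : List R} (h : IsWeaklyRegular R l) (c : ℕ → R)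
    (hc : ∑ i ∈ Finset.range l.length, c i * l.getD i 0 = 0) :
    ∀ i < l.length, c i ∈ Ideal.ofList l := by
  induction l using List.reverseRecOn generalizing c with
  | nil => intro i hi; simp at hi
  | append_singleton l z ih =>
    rcases (isWeaklyRegular_append_iff R l [z]).mp h with ⟨h1, h2⟩
    have h3 : IsSMulRegular (R ⧸ (Ideal.ofList l • ⊤ : Submodule R R)) z :=
      (isWeaklyRegular_singleton_iff _ z).mp h2
    have hlen : (l ++ [z]).length = l.length + 1 := by simp
    rw [hlen, Finset.sum_range_succ] at hc
    have hgetlast : (l ++ [z]).getD l.length 0 = z := by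
      rw [List.getD_append_right l [z] 0 l.length le_rfl]; simp
    have hget : ∀ i ∈ Finset.range l.length, c i * (l ++ [z]).getD i 0 = c i * l.getD i 0 :=
      fun i hi => by rw [List.getD_append l [z] 0 i (Finset.mem_range.mp hi)]
    rw [Finset.sum_congr rfl hget, hgetlast] at hc
    have hcz : c l.length * z ∈ Ideal.ofList l := by
      have : c l.length * z = -∑ i ∈ Finset.range l.length, c i * l.getD i 0 :=
        eq_neg_of_add_eq_zero_right hc
      rw [this]
      exact Submodule.neg_mem _ (Submodule.sum_mem _ fun i hi =>
        Ideal.mul_mem_left _ _ (getD_mem_ofList (Finset.mem_range.mp hi)))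
    have hcn : c l.length ∈ Ideal.ofList l := by
      have hz : z • (Submodule.Quotient.mk (p := (Ideal.ofList l • ⊤ : Submodule R R))
          (c l.length)) = 0 := by
        rw [← Submodule.Quotient.mk_smul, Submodule.Quotient.mk_eq_zero,
          smul_top_eq, smul_eq_mul, mul_comm]
        exact hcz
      have := h3 (by rw [hz, smul_zero] :
        z • (Submodule.Quotient.mk (p := (Ideal.ofList l • ⊤ : Submodule R R)) (c l.length))
          = z • 0)
      rw [Submodule.Quotient.mk_eq_zero, smul_top_eq] at this
      exact this
    rcases mem_ofList_iff.mp hcn with ⟨e, he⟩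
    have hsum : ∑ i ∈ Finset.range l.length, (c i + e i * z) * l.getD i 0 = 0 := by
      have : ∑ i ∈ Finset.range l.length, (c i + e i * z) * l.getD i 0
          = ∑ i ∈ Finset.range l.length, c i * l.getD i 0
            + (∑ i ∈ Finset.range l.length, e i * l.getD i 0) * z := by
        rw [Finset.sum_mul, ← Finset.sum_add_distrib]
        exact Finset.sum_congr rfl fun i _ => by ring
      rw [this, ← he, hc]
    have hih := ih h1 _ hsum
    intro i hi
    rw [hlen] at hi
    rcases Nat.lt_succ_iff_lt_or_eq.mp hi with hi' | hi'
    · have : c i = (c i + e i * z) - e i * z := by ring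
      rw [this]
      refine Submodule.sub_mem _ (ofList_le_ofList_append_left l [z] (hih i hi')) ?_
      exact Ideal.mul_mem_left _ _ (by
        rw [Ideal.ofList_append]
        exact Submodule.mem_sup_right (Ideal.subset_span (by simp)))
    · rw [hi']
      exact ofList_le_ofList_append_left l [z] hcn
end KoszulAux

section Dim

lemma exists_lt_of_one_le_krullDim {α : Type*} [Preorder α]
    (h : 1 ≤ Order.krullDim α) : ∃ a b : α, a < b := by
  by_contra hno
  push_neg at hno
  have hle : Order.krullDim α ≤ 0 := by
    refine iSup_le fun p => ?_
    have : p.length = 0 := by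
      by_contra h0
      exact hno _ _ (p.step ⟨0, Nat.pos_of_ne_zero h0⟩)
    simp [this]
  exact absurd (le_trans h hle) (by simp)

lemma maximalIdeal_infinite_of_chain {A : Type*} [CommRing A] [IsLocalRing A]
    (h : 1 ≤ ringKrullDim A) : (maximalIdeal A : Set A).Infinite := by
  obtain ⟨a, b, hab⟩ := exists_lt_of_one_le_krullDim h
  have hlt : a.asIdeal < b.asIdeal := hab
  obtain ⟨x, hxb, hxa⟩ := SetLike.exists_of_lt hlt
  have hxm : x ∈ maximalIdeal A := le_maximalIdeal b.isPrime.ne_top hxb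
  have key : ∀ m n : ℕ, m < n → x ^ (m + 1) = x ^ (n + 1) → False := by
    intro m n hmn heq
    have h1 : x ^ (m + 1) * (1 - x ^ (n - m)) = 0 := by
      have : x ^ (m + 1) * x ^ (n - m) = x ^ (n + 1) := by
        rw [← pow_add]; congr 1; omega
      rw [mul_sub, mul_one, this, heq, sub_self]
    have h2 : x ^ (m + 1) * (1 - x ^ (n - m)) ∈ a.asIdeal := by rw [h1]; exact zero_mem _
    rcases a.isPrime.mem_or_mem h2 with h3 | h3
    · exact hxa (a.isPrime.mem_of_pow_mem _ h3)
    · have h4 : 1 - x ^ (n - m) ∈ maximalIdeal A := le_maximalIdeal a.isPrime.ne_top h3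
      have h5 : x ^ (n - m) ∈ maximalIdeal A :=
        Ideal.pow_mem_of_mem _ hxm _ (by omega)
      have h6 : (1 : A) ∈ maximalIdeal A := by
        have := add_mem h4 h5
        simpa using this
      exact (maximalIdeal A).ne_top_iff_one.mp
        (Ideal.IsMaximal.ne_top (maximalIdeal.isMaximal A)) h6
  refine Set.infinite_of_injective_forall_mem (f := fun n : ℕ => x ^ (n + 1)) ?_ ?_
  · intro m n hmn
    by_contra hne
    rcases Nat.lt_or_ge m n with h' | h'
    · exact key m n h' hmn
    · exact key n m (by omega) hmn.symm
  · intro n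
    exact Ideal.pow_mem_of_mem _ hxm _ (by omega)

lemma exists_finset_card_eq_span_eq {A : Type*} [CommRing A] [IsLocalRing A] [DecidableEq A]
    {g : ℕ} (hdim : ringKrullDim A = (g : WithBot ℕ∞)) (s : Finset A)
    (hs : Ideal.span (s : Set A) = maximalIdeal A) (hcard : s.card ≤ g) :
    ∃ t : Finset A, Ideal.span (t : Set A) = maximalIdeal A ∧ t.card = g := by
  obtain ⟨k, hk⟩ : ∃ k, s.card + k = g := ⟨g - s.card, by omega⟩
  clear hcard
  induction k generalizing s with
  | zero => exact ⟨s, hs, by omega⟩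
  | succ k ih =>
    have hginf : (maximalIdeal A : Set A).Infinite := by
      apply maximalIdeal_infinite_of_chain
      rw [hdim]
      have : 1 ≤ g := by omega
      exact_mod_cast Nat.one_le_cast.mpr this
    obtain ⟨x, hxm, hxs⟩ : ∃ x ∈ maximalIdeal A, x ∉ s := by
      rcases Set.not_subset.mp
        (fun hsub => (hginf (Set.Finite.subset s.finite_toSet hsub))) with ⟨x, hx1, hx2⟩
      exact ⟨x, hx1, fun hc => hx2 hc⟩
    refine ih (insert x s) ?_ ?_
    · rw [Finset.coe_insert]
      show Submodule.span A (insert x ↑s) = maximalIdeal A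
      rw [Submodule.span_insert]
      refine le_antisymm (sup_le ?_ (le_of_eq hs)) ?_
      · rw [Submodule.span_singleton_le_iff_mem]; exact hxm
      · rw [← hs]; exact le_sup_right
    · rw [Finset.card_insert_of_notMem hxs]; omega

end Dim

section Loc
variable {R : Type*} [CommRing R]

lemma isWeaklyRegular_map_localization (p : Ideal R) [p.IsPrime] (zs : List R)
    (h : IsWeaklyRegular R zs) :
    IsWeaklyRegular (Localization.AtPrime p)
      (zs.map (algebraMap R (Localization.AtPrime p))) := by
  rw [isWeaklyRegular_map_algebraMap_iff]
  have h2 : IsWeaklyRegular ((Localization.AtPrime p) ⊗[R] R) zs :=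
    h.isWeaklyRegular_lTensor
  exact (LinearEquiv.isWeaklyRegular_congr
    (TensorProduct.rid R (Localization.AtPrime p)) zs).mp h2

lemma rlr_of_span (p : Ideal R) [p.IsPrime] {g : ℕ}
    (hht : ringKrullDim (Localization.AtPrime p) = (g : WithBot ℕ∞))
    (l : List R) (hl : ∀ z ∈ l, z ∈ p) (hlen : l.length ≤ g)
    (hspan : maximalIdeal (Localization.AtPrime p)
      ≤ Ideal.ofList (l.map (algebraMap R (Localization.AtPrime p)))) :
    IsRegularLocalRing' (Localization.AtPrime p) := by
  classical
  have hsub : Ideal.ofList (l.map (algebraMap R (Localization.AtPrime p)))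
      ≤ maximalIdeal (Localization.AtPrime p) := by
    refine Ideal.span_le.mpr ?_
    rintro x hx
    rcases List.mem_map.mp hx with ⟨z, hz, rfl⟩
    exact (IsLocalization.AtPrime.to_map_mem_maximal_iff _ p z).mpr (hl z hz)
  have hcoe : (((l.map (algebraMap R (Localization.AtPrime p))).toFinset : Finset _)
      : Set (Localization.AtPrime p)) = {r | r ∈ l.map (algebraMap R (Localization.AtPrime p))} := by
    ext x; simp
  have heq : Ideal.span (((l.map (algebraMap R (Localization.AtPrime p))).toFinset : Finset _)
      : Set (Localization.AtPrime p)) = maximalIdeal (Localization.AtPrime p) := by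
    rw [hcoe]
    exact le_antisymm hsub hspan
  obtain ⟨t, ht1, ht2⟩ := exists_finset_card_eq_span_eq hht _ heq
    (le_trans (List.toFinset_card_le _) (by simpa using hlen))
  exact ⟨t, ht1, by rw [ht2, hht]⟩

end Loc

section Unit
variable {R : Type*} [CommRing R]

/-- The "unit coefficient" case: if `a*t = ∑ a'ⱼ zⱼ` with some coefficient `a' i₀` outside
`p`, and `p*(a) ⊆ (zs)`, then the maximal ideal of `R_p` is spanned by the images of
`t` and the list `zs` with the `i₀`-th entry removed. -/
lemma span_of_unit_coeff [IsNoetherianRing R] (p : Ideal R) [p.IsPrime]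
    (zs : List R) (hwreg : IsWeaklyRegular R zs) (hzp : ∀ z ∈ zs, z ∈ p)
    (a t : R) (ht : t ∈ p) (hcolon : ∀ x ∈ p, a * x ∈ Ideal.ofList zs)
    (a' : ℕ → R) (ha' : a * t = ∑ j ∈ Finset.range zs.length, a' j * zs.getD j 0)
    (i₀ : ℕ) (hi₀ : i₀ < zs.length) (hi₀p : a' i₀ ∉ p) :
    maximalIdeal (Localization.AtPrime p)
      ≤ Ideal.ofList ((t :: zs.eraseIdx i₀).map (algebraMap R (Localization.AtPrime p))) := by
  classical
  set Rp := Localization.AtPrime p with hRpdef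
  haveI : IsNoetherianRing Rp := IsLocalization.isNoetherianRing p.primeCompl Rp inferInstance
  haveI : IsNoetherian Rp Rp := by rwa [← isNoetherianRing_iff]
  set F := algebraMap R Rp with hFdef
  set J := Ideal.ofList zs with hJdef
  set K' := Ideal.ofList ((zs.eraseIdx i₀).map F) with hK'def
  set ζ := F (zs.getD i₀ 0) with hζdef
  set α := F (a' i₀) with hαdef
  set π := Submodule.mkQ (K' • ⊤ : Submodule Rp Rp) with hπdef
  have hperm : zs.Perm (zs.eraseIdx i₀ ++ [zs.getD i₀ 0]) :=
    perm_eraseIdx_append_getD 0 zs i₀ hi₀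
  -- regularity of ζ modulo K'
  have hwr : IsWeaklyRegular Rp ((zs.eraseIdx i₀ ++ [zs.getD i₀ 0]).map F) :=
    IsLocalRing.isWeaklyRegular_of_perm_of_subset_maximalIdeal
      (isWeaklyRegular_map_localization p zs hwreg)
      (hperm.map F)
      (fun r hr => by
        rcases List.mem_map.mp hr with ⟨z, hz, rfl⟩
        exact (IsLocalization.AtPrime.to_map_mem_maximal_iff _ p z).mpr (hzp z hz))
  rw [List.map_append, List.map_singleton] at hwr
  rcases (isWeaklyRegular_append_iff Rp _ _).mp hwr with ⟨-, h2⟩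
  have hζreg : IsSMulRegular (Rp ⧸ (K' • ⊤ : Submodule Rp Rp)) ζ :=
    (isWeaklyRegular_singleton_iff _ _).mp h2
  -- decomposition of F (a * t)
  have hκ : F (a * t) - α * ζ ∈ K' := by
    have hsum : F (a * t) = ∑ j ∈ Finset.range zs.length, F (a' j) * F (zs.getD j 0) := by
      rw [ha', map_sum]
      exact Finset.sum_congr rfl fun j _ => map_mul F _ _
    have hsplit : ∑ j ∈ Finset.range zs.length, F (a' j) * F (zs.getD j 0)
        = α * ζ + ∑ j ∈ (Finset.range zs.length).erase i₀, F (a' j) * F (zs.getD j 0) :=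
      (Finset.add_sum_erase _ _ (Finset.mem_range.mpr hi₀)).symm
    rw [hsum, hsplit, add_sub_cancel_left]
    refine Submodule.sum_mem _ fun j hj => ?_
    rcases Finset.mem_erase.mp hj with ⟨hjne, hjr⟩
    refine Ideal.mul_mem_left _ _ (Ideal.subset_span ?_)
    exact List.mem_map_of_mem (f := F)
      (getD_mem_eraseIdx 0 zs j i₀ (Finset.mem_range.mp hjr) hjne)
  obtain ⟨u, hu⟩ : IsUnit α :=
    (IsLocalization.AtPrime.isUnit_to_map_iff Rp p (a' i₀)).mpr hi₀p
  -- now the span computation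
  intro v hv
  rw [List.map_cons, Ideal.ofList_cons, ← hK'def]
  have hvFa : v * F a ∈ Ideal.map F J := by
    have hv' : v ∈ Ideal.map F p := by
      rw [Localization.AtPrime.map_eq_maximalIdeal]; exact hv
    have hmul : Ideal.map F p * Ideal.span {F a} ≤ Ideal.map F J := by
      have h1 : Ideal.span ({F a} : Set Rp) = Ideal.map F (Ideal.span {a}) := by
        rw [Ideal.map_span, Set.image_singleton]
      rw [h1, ← Ideal.map_mul]
      refine Ideal.map_mono (Ideal.mul_le.mpr fun r hr s hs => ?_)
      rcases Ideal.mem_span_singleton'.mp hs with ⟨y, rfl⟩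
      rw [show r * (y * a) = y * (a * r) by ring]
      exact Ideal.mul_mem_left _ _ (hcolon r hr)
    exact hmul (Ideal.mul_mem_mul hv' (Ideal.subset_span rfl))
  have hJp : Ideal.map F J = K' ⊔ Ideal.span {ζ} := by
    rw [hJdef, Ideal.map_ofList]
    have e3 : Ideal.ofList (zs.map F)
        = Ideal.ofList ((zs.eraseIdx i₀ ++ [zs.getD i₀ 0]).map F) :=
      congrArg Ideal.span (Set.ext fun x => (hperm.map F).mem_iff)
    rw [e3, List.map_append, Ideal.ofList_append, List.map_singleton, Ideal.ofList_singleton]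
  rw [hJp] at hvFa
  rcases Submodule.mem_sup.mp hvFa with ⟨κ', hκ', w', hw', hvw⟩
  rcases Ideal.mem_span_singleton'.mp hw' with ⟨w, rfl⟩
  -- quotient computations
  have hmkeq : ∀ x y : Rp, x - y ∈ K' → π x = π y := by
    intro x y hxy
    rw [hπdef, Submodule.mkQ_apply, Submodule.mkQ_apply]
    refine (Submodule.Quotient.eq _).mpr ?_
    rwa [smul_top_eq]
  have hsmulπ : ∀ x y : Rp, x • π y = π (x * y) := by
    intro x y
    rw [← map_smul]
    exact congrArg π (smul_eq_mul (a := x) (b := y))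
  have q1 : π (F (a * t)) = α • π ζ := by
    rw [hsmulπ]
    exact hmkeq _ _ hκ
  have q2 : π (v * F a) = w • π ζ := by
    rw [hsmulπ]
    refine hmkeq _ _ ?_
    rw [show v * F a - w * ζ = κ' from by rw [← hvw]; ring]
    exact hκ'
  have q3 : (α * v - F t * w) • π ζ = 0 := by
    have e4 : (α * v) • π ζ = π (v * F (a * t)) := by
      rw [mul_comm α v, mul_smul, ← q1, hsmulπ]
    have e5 : (F t * w) • π ζ = π (F t * (v * F a)) := by
      rw [mul_smul, ← q2, hsmulπ]
    have e6 : v * F (a * t) = F t * (v * F a) := by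
      rw [map_mul]; ring
    rw [sub_smul, e4, e5, e6, sub_self]
  have q4 : α * v - F t * w ∈ K' := by
    have h0 : ζ • π (α * v - F t * w) = 0 := by
      rw [hsmulπ, mul_comm, ← hsmulπ, q3]
    have := hζreg (by rw [h0, smul_zero] :
      ζ • π (α * v - F t * w) = ζ • (0 : Rp ⧸ (K' • ⊤ : Submodule Rp Rp)))
    rw [hπdef, Submodule.mkQ_apply, Submodule.Quotient.mk_eq_zero, smul_top_eq] at this
    exact this
  have q5 : α * v ∈ Ideal.span {F t} ⊔ K' := by
    rw [show α * v = (α * v - F t * w) + F t * w by ring]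
    exact add_mem (Submodule.mem_sup_right q4)
      (Submodule.mem_sup_left (Ideal.mem_span_singleton'.mpr ⟨w, by ring⟩))
  have q6 : v = ↑u⁻¹ * (α * v) := by
    rw [← hu, ← mul_assoc, Units.inv_mul, one_mul]
  rw [q6]
  exact Ideal.mul_mem_left _ _ q5


end Unit

end CHVAux

/-- Let `(R, m)` be a Cohen–Macaulay local ring, `p` a prime of height `g`
(i.e. `dim R_p = g`) with `R_p` not regular, `z₁, …, z_g` a regular sequence contained in
`p`, `J = (z₁, …, z_g)` and `I = J : p`.  Then `J ⊆ I` and `I² = J·I`; in particular `J`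
is a reduction of `I` with reduction number at most `1`, so `I` is equimultiple. -/
theorem links_of_primes_stmt4 {R : Type*} [CommRing R] [IsLocalRing R] [IsNoetherianRing R]
    (hCM : IsCohenMacaulayLocalRing R)
    (p : Ideal R) [hp : p.IsPrime] (g : ℕ)
    (hht : ringKrullDim (Localization.AtPrime p) = g)
    (hnotreg : ¬ IsRegularLocalRing' (Localization.AtPrime p))
    (zs : List R) (hlen : zs.length = g) (hzp : ∀ z ∈ zs, z ∈ p)
    (hreg : IsRegular R zs)
    (J I : Ideal R) (hJ : J = Ideal.ofList zs) (hI : I = J.colon p) :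
    J ≤ I ∧ I ^ 2 = J * I := by
  classical
  subst hJ
  subst hI
  set Rp := Localization.AtPrime p with hRpdef
  set F := algebraMap R Rp with hFdef
  set J := Ideal.ofList zs with hJdef
  set I := J.colon p with hIdef
  -- J ≤ I
  have hJI : J ≤ I := by
    intro x hx
    refine Submodule.mem_colon.mpr fun t _ => ?_
    rw [smul_eq_mul]
    exact Ideal.mul_mem_right t _ hx
  -- the "non-regularity" contradiction machine
  have hNR : ∀ (l : List R), (∀ z ∈ l, z ∈ p) → l.length ≤ g →
      maximalIdeal Rp ≤ Ideal.ofList (l.map F) → False := fun l h1 h2 h3 =>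
    hnotreg (CHVAux.rlr_of_span p hht l h1 h2 h3)
  -- I ≤ p
  have hIp : I ≤ p := by
    by_contra hc
    rcases SetLike.not_le_iff_exists.mp hc with ⟨a, haI, hap⟩
    refine hNR zs hzp (le_of_eq hlen) ?_
    rw [← Ideal.map_ofList, ← hJdef, ← Localization.AtPrime.map_eq_maximalIdeal]
    refine Ideal.map_le_iff_le_comap.mpr fun x hx => ?_
    have hxa : a * x ∈ J := by
      have := Submodule.mem_colon.mp haI x hx
      rwa [smul_eq_mul] at this
    obtain ⟨u, hu⟩ : IsUnit (F a) :=
      (IsLocalization.AtPrime.isUnit_to_map_iff Rp p a).mpr hap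
    show F x ∈ Ideal.map F J
    have h1 : F (a * x) ∈ Ideal.map F J := Ideal.mem_map_of_mem F hxa
    have h2 : F x = ↑u⁻¹ * F (a * x) := by
      rw [map_mul, ← hu, ← mul_assoc, Units.inv_mul, one_mul]
    rw [h2]
    exact Ideal.mul_mem_left _ _ h1
  -- main step: products of elements of I lie in J * I
  have hmain : ∀ a ∈ I, ∀ b ∈ I, a * b ∈ J * I := by
    intro a ha b hb
    have hab : a * b ∈ J := by
      have := Submodule.mem_colon.mp ha b (hIp hb)
      rwa [smul_eq_mul] at this
    rcases CHVAux.mem_ofList_iff.mp hab with ⟨c, hc⟩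
    have hcI : ∀ i ∈ Finset.range zs.length, c i ∈ I := by
      intro i hi
      have hi' := Finset.mem_range.mp hi
      refine Submodule.mem_colon.mpr fun t ht => ?_
      rw [smul_eq_mul]
      have hat : a * t ∈ J := by
        have := Submodule.mem_colon.mp ha t ht
        rwa [smul_eq_mul] at this
      rcases CHVAux.mem_ofList_iff.mp hat with ⟨a', ha'⟩
      by_cases hall : ∀ j < zs.length, a' j ∈ p
      · -- Koszul case
        have hzero : ∑ j ∈ Finset.range zs.length,
            (t * c j - a' j * b) * zs.getD j 0 = 0 := by
          have e1 : ∑ j ∈ Finset.range zs.length, (t * c j - a' j * b) * zs.getD j 0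
              = t * (a * b) - (a * t) * b := by
            rw [hc, ha', Finset.mul_sum, Finset.sum_mul, ← Finset.sum_sub_distrib]
            exact Finset.sum_congr rfl fun j _ => by ring
          rw [e1]; ring
        have hd := CHVAux.koszul_syzygy hreg.toIsWeaklyRegular _ hzero i hi'
        have hab' : a' i * b ∈ J := by
          have := Submodule.mem_colon.mp hb (a' i) (hall i hi')
          rwa [smul_eq_mul, mul_comm] at this
        have e2 : c i * t = (t * c i - a' i * b) + a' i * b := by ring
        rw [e2]
        exact add_mem hd hab'
      · -- unit-coefficient case: contradiction with non-regularity of R_p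
        exfalso
        push_neg at hall
        obtain ⟨i₀, hi₀, hi₀p⟩ := hall
        have hcolon : ∀ x ∈ p, a * x ∈ Ideal.ofList zs := fun x hx => by
          have := Submodule.mem_colon.mp ha x hx
          rwa [smul_eq_mul] at this
        refine hNR (t :: zs.eraseIdx i₀) ?_ ?_
          (CHVAux.span_of_unit_coeff p zs hreg.toIsWeaklyRegular hzp a t ht hcolon
            a' ha' i₀ hi₀ hi₀p)
        · intro z hz
          rcases List.mem_cons.mp hz with rfl | hz'
          · exact ht
          · exact hzp z (List.eraseIdx_subset hz')
        · have := List.length_eraseIdx_of_lt hi₀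
          simp only [List.length_cons, this]
          omega
    rw [hc]
    refine Submodule.sum_mem _ fun i hi => ?_
    rw [mul_comm (c i) (zs.getD i 0)]
    exact Ideal.mul_mem_mul (CHVAux.getD_mem_ofList (Finset.mem_range.mp hi)) (hcI i hi)
  refine ⟨hJI, le_antisymm ?_ ?_⟩
  · rw [pow_two]
    exact Ideal.mul_le.mpr hmain
  · rw [pow_two]
    exact Ideal.mul_mono hJI le_rfl
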